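/- Let Q̃ be symmetric (n+1)×(n+1) with minimum eigenvalue λ < 0 of multiplicity at least two, g̃ ∈ ℝ^{n+1}, and for t ∈ [0,1] define V_t = [[(1−t)I + tQ̃, tg̃],[tg̃ᵀ, t−1]]. Then the maximal s ∈ [0,1] such that V_t has exactly one negative eigenvalue for all t ∈ [0,s], V_t is invertible for all t ∈ (0,s), and V_s is singular is s = 1/(1−λ). -/

import Mathlib

open Matrix

/-- The bordered matrix `V_t = [[(1-t)I + tQ̃, t g̃],[t g̃ᵀ, t-1]]`. -/
noncomputable def borderedV {n : ℕ} (Qt : Matrix (Fin (n+1)) (Fin (n+1)) ℝ)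
    (gt : Fin (n+1) → ℝ) (t : ℝ) : Matrix (Fin (n+1) ⊕ Unit) (Fin (n+1) ⊕ Unit) ℝ :=
  Matrix.fromBlocks ((1-t) • (1 : Matrix (Fin (n+1)) (Fin (n+1)) ℝ) + t • Qt)
    (Matrix.replicateCol Unit (t • gt)) (Matrix.replicateRow Unit (t • gt)) ((t-1) • (1 : Matrix Unit Unit ℝ))

section General

variable {m : Type*} [Fintype m] [DecidableEq m] (A : Matrix m m ℝ) (hA : A.IsHermitian)

/-- Coordinates w.r.t. the orthonormal eigenbasis. -/
noncomputable def eLaux (x : m → ℝ) : m → ℝ := star (hA.eigenvectorUnitary : Matrix m m ℝ) *ᵥ x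

theorem quad_eq_aux (x : m → ℝ) :
    x ⬝ᵥ A *ᵥ x = ∑ i, hA.eigenvalues i * (eLaux A hA x i)^2 := by
  conv_lhs => rw [hA.spectral_theorem, Unitary.conjStarAlgAut_apply, ← mulVec_mulVec, ← mulVec_mulVec]
  rw [eLaux, dotProduct_mulVec, ← mulVec_transpose, ← conjTranspose_eq_transpose_of_trivial,
    ← Matrix.star_eq_conjTranspose]
  simp [dotProduct, mulVec_diagonal, Function.comp]
  congr 1; ext i; ring

theorem eLaux_inj : Function.Injective (eLaux A hA) := by
  intro a b hab
  have := congrArg (fun z => (hA.eigenvectorUnitary : Matrix m m ℝ) *ᵥ z) hab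
  simpa [eLaux, mulVec_mulVec, (Matrix.mem_unitaryGroup_iff).mp hA.eigenvectorUnitary.2,
    Unitary.coe_mul_star_self] using this

open Classical in
theorem exists_supported_aux {α : Type*} [Fintype α] (S : Set m)
    (hS : S.ncard < Fintype.card α) (ι : (α → ℝ) →ₗ[ℝ] (m → ℝ)) :
    ∃ y : α → ℝ, y ≠ 0 ∧ ∀ i ∈ S, eLaux A hA (ι y) i = 0 := by
  have hSfin : S.Finite := S.toFinite
  haveI : Fintype S := hSfin.fintype
  let eLL : (m → ℝ) →ₗ[ℝ] (m → ℝ) :=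
    Matrix.mulVecLin (star (hA.eigenvectorUnitary : Matrix m m ℝ))
  let ψ : (α → ℝ) →ₗ[ℝ] (S → ℝ) :=
    LinearMap.pi (fun i : S => (LinearMap.proj (i : m)).comp (eLL.comp ι))
  by_contra hcon
  push_neg at hcon
  have hinj : Function.Injective ψ := by
    rw [← LinearMap.ker_eq_bot, Submodule.eq_bot_iff]
    intro y hy
    by_contra hy0
    obtain ⟨i, hiS, hne⟩ := hcon y hy0
    exact hne (congrFun hy ⟨i, hiS⟩)
  have := LinearMap.finrank_le_finrank_of_injective hinj
  rw [Module.finrank_pi, Module.finrank_pi] at this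
  rw [Set.ncard_eq_toFinset_card', Set.toFinset_card] at hS
  omega

theorem ncard_neg_le_aux {α : Type*} [Fintype α] (ι : (α → ℝ) →ₗ[ℝ] (m → ℝ))
    (hι : Function.Injective ι) (hpos : ∀ y, 0 ≤ (ι y) ⬝ᵥ A *ᵥ (ι y)) :
    {i | hA.eigenvalues i < 0}.ncard + Fintype.card α ≤ Fintype.card m := by
  by_contra hcon
  push_neg at hcon
  set S : Set m := {i | 0 ≤ hA.eigenvalues i} with hSdef
  have hcompl : S = {i | hA.eigenvalues i < 0}ᶜ := by
    ext i; simp [hSdef, not_lt]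
  have hcard : S.ncard < Fintype.card α := by
    have h1 : {i | hA.eigenvalues i < 0}.ncard + S.ncard = Fintype.card m := by
      rw [hcompl]
      have := Set.ncard_add_ncard_compl {i | hA.eigenvalues i < 0}
      simpa [Set.ncard_univ, Nat.card_eq_fintype_card] using this
    omega
  obtain ⟨y, hy0, hysupp⟩ := exists_supported_aux A hA S hcard ι
  have hx0 : ι y ≠ 0 := fun h => hy0 (hι (by rw [h]; exact (map_zero ι).symm))
  have heL0 : eLaux A hA (ι y) ≠ 0 := fun h => hx0 (eLaux_inj A hA (by rw [h]; simp [eLaux]))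
  obtain ⟨i0, hi0⟩ : ∃ i, eLaux A hA (ι y) i ≠ 0 := by
    by_contra h; push_neg at h; exact heL0 (funext h)
  have hi0S : hA.eigenvalues i0 < 0 := by
    by_contra h; push_neg at h
    exact hi0 (hysupp i0 h)
  have hqneg : (ι y) ⬝ᵥ A *ᵥ (ι y) < 0 := by
    rw [quad_eq_aux]
    have : ∑ i, hA.eigenvalues i * (eLaux A hA (ι y) i)^2 < ∑ i : m, (0:ℝ) := by
      apply Finset.sum_lt_sum
      · intro i _
        by_cases hiS : 0 ≤ hA.eigenvalues i
        · rw [hysupp i hiS]; simp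
        · push_neg at hiS
          exact mul_nonpos_of_nonpos_of_nonneg hiS.le (sq_nonneg _)
      · exact ⟨i0, Finset.mem_univ _, mul_neg_of_neg_of_pos hi0S (by positivity)⟩
    simpa using this
  exact absurd (hpos y) (not_le.mpr hqneg)

theorem le_ncard_neg_aux {α : Type*} [Fintype α] (ι : (α → ℝ) →ₗ[ℝ] (m → ℝ))
    (hneg : ∀ y, y ≠ 0 → (ι y) ⬝ᵥ A *ᵥ (ι y) < 0) :
    Fintype.card α ≤ {i | hA.eigenvalues i < 0}.ncard := by
  by_contra hcon
  push_neg at hcon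
  obtain ⟨y, hy0, hysupp⟩ := exists_supported_aux A hA _ hcon ι
  have hq : 0 ≤ (ι y) ⬝ᵥ A *ᵥ (ι y) := by
    rw [quad_eq_aux A hA]
    apply Finset.sum_nonneg
    intro i _
    by_cases hiS : hA.eigenvalues i < 0
    · rw [hysupp i hiS]; simp
    · push_neg at hiS
      exact mul_nonneg hiS (sq_nonneg _)
  exact absurd (hneg y hy0) (not_lt.mpr hq)

end General

theorem quad_bordered_aux {n : ℕ} (Qt : Matrix (Fin (n+1)) (Fin (n+1)) ℝ) (gt : Fin (n+1) → ℝ)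
    (t : ℝ) (y : Fin (n+1) → ℝ) (a : ℝ) :
    (Sum.elim y (fun _ => a)) ⬝ᵥ (borderedV Qt gt t) *ᵥ (Sum.elim y (fun _ => a)) =
    (1-t) * (∑ i, y i ^ 2) + t * (y ⬝ᵥ Qt *ᵥ y) + 2*t*a*(gt ⬝ᵥ y) + (t-1) * a^2 := by
  rw [borderedV, fromBlocks_mulVec, sumElim_dotProduct_sumElim, dotProduct_add, dotProduct_add]
  have h1 : y ⬝ᵥ (((1-t) • (1 : Matrix (Fin (n+1)) (Fin (n+1)) ℝ) + t • Qt) *ᵥ y)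
      = (1-t) * (∑ i, y i ^ 2) + t * (y ⬝ᵥ Qt *ᵥ y) := by
    simp [add_mulVec, smul_mulVec, dotProduct_add, dotProduct_smul, dotProduct,
      Finset.mul_sum, sq, mul_add, Finset.sum_add_distrib, mul_left_comm, mul_comm]
    apply Finset.sum_congr rfl; intros; ring
  have h2 : y ⬝ᵥ ((Matrix.replicateCol Unit (t • gt)) *ᵥ (fun _ => a)) = t*a*(gt ⬝ᵥ y) := by
    simp [mulVec, dotProduct, Finset.mul_sum]; ring_nf
    apply Finset.sum_congr rfl; intros; ring
  have h3 : (fun (_ : Unit) => a) ⬝ᵥ ((Matrix.replicateRow Unit (t • gt)) *ᵥ y) = t*a*(gt ⬝ᵥ y) := by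
    simp [mulVec, dotProduct, Finset.mul_sum]; ring_nf
  have h4 : (fun (_ : Unit) => a) ⬝ᵥ (((t-1) • (1 : Matrix Unit Unit ℝ)) *ᵥ (fun _ => a))
      = (t-1) * a^2 := by
    simp [mulVec, dotProduct, sq]; ring
  simp only [Sum.elim_comp_inl, Sum.elim_comp_inr]
  rw [h1, h2, h3, h4]; ring

theorem sq_sum_pos_aux {n : ℕ} {u : Fin (n+1) → ℝ} (hu : u ≠ 0) : 0 < ∑ i, u i ^ 2 := by
  obtain ⟨j, hj⟩ : ∃ j, u j ≠ 0 := by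
    by_contra h; push_neg at h; exact hu (funext h)
  exact Finset.sum_pos' (fun i _ => sq_nonneg _)
    ⟨j, Finset.mem_univ _, lt_of_le_of_ne (sq_nonneg _) (Ne.symm (pow_ne_zero 2 hj))⟩

set_option maxHeartbeats 1000000 in
theorem s_value_computation {n : ℕ} (Qt : Matrix (Fin (n+1)) (Fin (n+1)) ℝ)
    (gt : Fin (n+1) → ℝ) (lam : ℝ)
    (hQ : Qt.IsSymm)
    (hlb : ∀ y : Fin (n+1) → ℝ, lam * (∑ i, y i ^ 2) ≤ y ⬝ᵥ Qt.mulVec y)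
    (hmult : ∃ v w : Fin (n+1) → ℝ, LinearIndependent ℝ ![v, w] ∧
      Qt.mulVec v = lam • v ∧ Qt.mulVec w = lam • w)
    (hneg : lam < 0)
    (hherm : ∀ t : ℝ, (borderedV Qt gt t).IsHermitian) :
    (1 / (1 - lam)) ∈ Set.Ioo (0:ℝ) 1 ∧
    (∀ t ∈ Set.Icc (0:ℝ) (1 / (1 - lam)),
      {i | (hherm t).eigenvalues i < 0}.ncard = 1) ∧
    (∀ t ∈ Set.Ioo (0:ℝ) (1 / (1 - lam)), (borderedV Qt gt t).det ≠ 0) ∧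
    (borderedV Qt gt (1 / (1 - lam))).det = 0 ∧
    (∀ s' ∈ Set.Icc (0:ℝ) 1,
      (∀ t ∈ Set.Icc (0:ℝ) s', {i | (hherm t).eigenvalues i < 0}.ncard = 1) →
      s' ≤ 1 / (1 - lam)) := by
  obtain ⟨v, w, hvw, hQv, hQw⟩ := hmult
  have hpair := LinearIndependent.pair_iff.mp hvw
  set s : ℝ := 1 / (1 - lam) with hs_def
  have hlam1 : (1:ℝ) < 1 - lam := by linarith
  have hlam0 : (0:ℝ) < 1 - lam := by linarith
  have hs0 : 0 < s := by positivity
  have hs1 : s < 1 := by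
    rw [hs_def, div_lt_one hlam0]; linarith
  have hsmul : s * (1 - lam) = 1 := by
    rw [hs_def]; field_simp
  -- the linear embedding of the top block
  let ι₁ : (Fin (n+1) → ℝ) →ₗ[ℝ] (Fin (n+1) ⊕ Unit → ℝ) :=
    { toFun := fun y => Sum.elim y 0
      map_add' := fun y z => by funext i; cases i <;> simp
      map_smul' := fun c y => by funext i; cases i <;> simp }
  have hι₁ : Function.Injective ι₁ := by
    intro a b h; funext i; exact congrFun h (Sum.inl i)
  -- the embedding of the last coordinate
  let ι₂ : (Unit → ℝ) →ₗ[ℝ] (Fin (n+1) ⊕ Unit → ℝ) :=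
    { toFun := fun y => Sum.elim 0 (fun _ => y ())
      map_add' := fun y z => by funext i; cases i <;> simp
      map_smul' := fun c y => by funext i; cases i <;> simp }
  have hcard : Fintype.card (Fin (n+1) ⊕ Unit) = n + 2 := by simp
  -- counting for t ∈ [0, s]
  have hcount : ∀ t ∈ Set.Icc (0:ℝ) s, {i | (hherm t).eigenvalues i < 0}.ncard = 1 := by
    intro t ht
    obtain ⟨ht0, hts⟩ := ht
    have htc : 0 ≤ 1 - t * (1 - lam) := by nlinarith
    have ht1 : t < 1 := lt_of_le_of_lt hts hs1
    have hub := ncard_neg_le_aux (borderedV Qt gt t) (hherm t) ι₁ hι₁ ?_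
    have hlbn := le_ncard_neg_aux (borderedV Qt gt t) (hherm t) ι₂ ?_
    · rw [hcard, Fintype.card_fin] at hub
      rw [Fintype.card_unit] at hlbn
      omega
    · intro y hy
      have hy' : y () ≠ 0 := fun h => hy (funext fun u => by cases u; exact h)
      have : (ι₂ y) ⬝ᵥ (borderedV Qt gt t) *ᵥ (ι₂ y) = (t-1) * (y ())^2 := by
        have := quad_bordered_aux Qt gt t 0 (y ())
        rw [show ι₂ y = Sum.elim (0 : Fin (n+1) → ℝ) (fun _ => y ()) from rfl]
        simpa using this
      rw [this]
      have : (0:ℝ) < (y ())^2 :=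
        lt_of_le_of_ne (sq_nonneg _) (Ne.symm (pow_ne_zero 2 hy'))
      nlinarith
    · intro y
      have hq : (ι₁ y) ⬝ᵥ (borderedV Qt gt t) *ᵥ (ι₁ y)
          = (1-t) * (∑ i, y i ^ 2) + t * (y ⬝ᵥ Qt *ᵥ y) := by
        have := quad_bordered_aux Qt gt t y 0
        rw [show ι₁ y = Sum.elim y (fun _ => 0) from rfl]
        simpa using this
      rw [hq]
      have h1 := hlb y
      have h2 : 0 ≤ ∑ i, y i ^ 2 := Finset.sum_nonneg fun i _ => sq_nonneg _
      nlinarith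
  refine ⟨⟨hs0, hs1⟩, hcount, ?_, ?_, ?_⟩
  · -- invertibility on (0, s)
    intro t ht hdet
    obtain ⟨ht0, hts⟩ := ht
    have ht1 : t < 1 := lt_trans hts hs1
    have htc : 0 < 1 - t * (1 - lam) := by nlinarith
    obtain ⟨x, hx0, hVx⟩ := (Matrix.exists_mulVec_eq_zero_iff (M := borderedV Qt gt t)).mpr hdet
    set y : Fin (n+1) → ℝ := x ∘ Sum.inl with hy_def
    set a : ℝ := x (Sum.inr ()) with ha_def
    have hx : x = Sum.elim y (fun _ => a) := by
      funext i; cases i with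
      | inl j => rfl
      | inr u => cases u; rfl
    have hbot : (∑ i, t * gt i * y i) + (t-1) * a = 0 := by
      have := congrFun hVx (Sum.inr ())
      rw [hx] at this
      simpa [borderedV, fromBlocks_mulVec, mulVec, dotProduct] using this
    have hbot' : t * (gt ⬝ᵥ y) + (t-1) * a = 0 := by
      rw [dotProduct, Finset.mul_sum]
      rw [← hbot]
      congr 1
      apply Finset.sum_congr rfl; intros; ring
    have hq0 : (0:ℝ) = (1-t) * (∑ i, y i ^ 2) + t * (y ⬝ᵥ Qt *ᵥ y)
        + 2*t*a*(gt ⬝ᵥ y) + (t-1) * a^2 := by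
      rw [← quad_bordered_aux, ← hx, hVx, dotProduct_zero]
    have h2 : 2*t*a*(gt ⬝ᵥ y) = 2*(1-t)*a^2 := by
      have ht' : t * (gt ⬝ᵥ y) = (1-t) * a := by linarith
      calc 2*t*a*(gt ⬝ᵥ y) = 2*a*(t*(gt ⬝ᵥ y)) := by ring
        _ = 2*a*((1-t)*a) := by rw [ht']
        _ = 2*(1-t)*a^2 := by ring
    have hQy := hlb y
    have hS : 0 ≤ ∑ i, y i ^ 2 := Finset.sum_nonneg fun i _ => sq_nonneg _
    have ha2 : 0 ≤ a^2 := sq_nonneg _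
    have hSz : ∑ i, y i ^ 2 = 0 ∧ a^2 = 0 := by
      constructor <;> nlinarith
    have hy0 : y = 0 := by
      funext i
      have := (Finset.sum_eq_zero_iff_of_nonneg (fun i _ => sq_nonneg (y i))).mp hSz.1
        i (Finset.mem_univ i)
      exact pow_eq_zero_iff (n := 2) (by norm_num) |>.mp this
    have ha0 : a = 0 := pow_eq_zero_iff (n := 2) (by norm_num) |>.mp hSz.2
    apply hx0
    rw [hx, hy0, ha0]
    funext i; cases i <;> simp
  · -- singularity at s
    have hzero : 1 - s + s * lam = 0 := by linear_combination -hsmul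
    -- find eigenvector orthogonal to gt
    obtain ⟨u, hu0, hQu, hgu⟩ : ∃ u : Fin (n+1) → ℝ, u ≠ 0 ∧ Qt *ᵥ u = lam • u ∧ gt ⬝ᵥ u = 0 := by
      by_cases hgv : gt ⬝ᵥ v = 0
      · refine ⟨v, ?_, hQv, hgv⟩
        intro h
        have := hpair 1 0 (by rw [h]; simp)
        exact one_ne_zero this.1
      · refine ⟨(gt ⬝ᵥ v) • w - (gt ⬝ᵥ w) • v, ?_, ?_, ?_⟩
        · intro h
          have : (-(gt ⬝ᵥ w)) • v + (gt ⬝ᵥ v) • w = 0 := by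
            rw [← h]; funext i; simp; ring
          exact hgv (hpair _ _ this).2
        · rw [mulVec_sub, mulVec_smul, mulVec_smul, hQv, hQw]
          funext i; simp; ring
        · simp [dotProduct_sub, dotProduct_smul]; ring
    set x : Fin (n+1) ⊕ Unit → ℝ := Sum.elim u (fun _ => 0) with hx_def
    have hx0 : x ≠ 0 := by
      intro h
      apply hu0
      funext i
      exact congrFun h (Sum.inl i)
    have hVx : borderedV Qt gt s *ᵥ x = 0 := by
      rw [hx_def]
      have : (fun (_ : Unit) => (0:ℝ)) = (0 : Unit → ℝ) := rfl
      rw [this, borderedV, fromBlocks_mulVec]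
      simp only [Sum.elim_comp_inl, Sum.elim_comp_inr, mulVec_zero, add_zero]
      funext i
      cases i with
      | inl j =>
        simp only [Sum.elim_inl, Pi.zero_apply]
        rw [add_mulVec, smul_mulVec, smul_mulVec, one_mulVec, hQu]
        simp only [Pi.add_apply, Pi.smul_apply, smul_eq_mul]
        linear_combination (u j) * hzero
      | inr un =>
        simp only [Sum.elim_inr, Pi.zero_apply, mulVec, dotProduct]
        rw [show ∑ i, Matrix.replicateRow Unit (s • gt) un i * u i = s * (gt ⬝ᵥ u) by
          rw [dotProduct, Finset.mul_sum]; apply Finset.sum_congr rfl; intros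
          simp [Matrix.replicateRow_apply]; ring]
        rw [hgu]; ring
    exact Matrix.exists_mulVec_eq_zero_iff.mp ⟨x, hx0, hVx⟩
  · -- maximality
    intro s' hs' hcnt
    by_contra hgt
    push_neg at hgt
    have hts : s < s' := hgt
    have htc : 1 - s' * (1 - lam) < 0 := by nlinarith
    -- linear map of the 2-dim negative subspace
    let ι₃ : (Fin 2 → ℝ) →ₗ[ℝ] (Fin (n+1) ⊕ Unit → ℝ) :=
      { toFun := fun y => Sum.elim (y 0 • v + y 1 • w) 0
        map_add' := fun y z => by
          funext i; cases i <;> simp [mul_add, add_mul] <;> ring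
        map_smul' := fun c y => by
          funext i; cases i <;> simp [mul_add] <;> ring }
    have hlbn := le_ncard_neg_aux (borderedV Qt gt s') (hherm s') ι₃ ?_
    · have := hcnt s' ⟨hs'.1, le_refl _⟩
      rw [Fintype.card_fin] at hlbn
      omega
    · intro y hy
      set u : Fin (n+1) → ℝ := y 0 • v + y 1 • w with hu_def
      have hu0 : u ≠ 0 := by
        intro h
        have := hpair (y 0) (y 1) h
        apply hy
        funext i
        fin_cases i
        · exact this.1
        · exact this.2
      have hQu : Qt *ᵥ u = lam • u := by
        rw [hu_def, mulVec_add, mulVec_smul, mulVec_smul, hQv, hQw]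
        funext i; simp; ring
      have hq : (ι₃ y) ⬝ᵥ (borderedV Qt gt s') *ᵥ (ι₃ y)
          = (1-s') * (∑ i, u i ^ 2) + s' * (u ⬝ᵥ Qt *ᵥ u) := by
        have := quad_bordered_aux Qt gt s' u 0
        rw [show ι₃ y = Sum.elim u (fun _ => 0) from rfl]
        simpa using this
      have hQuad : u ⬝ᵥ Qt *ᵥ u = lam * ∑ i, u i ^ 2 := by
        rw [hQu]
        simp only [dotProduct, Pi.smul_apply, smul_eq_mul, Finset.mul_sum]
        apply Finset.sum_congr rfl; intros; ring
      rw [hq, hQuad]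
      have hSpos : 0 < ∑ i, u i ^ 2 := sq_sum_pos_aux hu0
      nlinarith
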